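/- There is a bijection between the set W_N of coordinate configurations with consecutive values (differences of successive entries in {0,1}, each value of multiplicity ≤ N, eventually equal to the vacuum levels) and the set R_N of rank-N ribbons whose leftmost column has height < N and whose length is divisible by N, given by m ↦ [p_1,…,p_l] where p_i are the multiplicities of the distinct values of m up to the last value of multiplicity < N. -/

import Mathlib

/-- The level part `b` of an integer `m = a - N·b` with `a ∈ {1,…,N}`. -/
def levPart (N : ℕ) (m : ℤ) : ℤ := -((m - 1) / N)

/-- The multiplicity of the value `v` in the sequence `m`. -/
noncomputable def cntVal (m : ℕ → ℤ) (v : ℤ) : ℕ := Set.ncard {i | m i = v}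

/-- The number of columns of the ribbon attached to `m`: the least `l` such that
every value `m 0 + t` with `t ≥ l` has full multiplicity `N`. -/
noncomputable def ribbonLen (N : ℕ) (m : ℕ → ℤ) : ℕ :=
  sInf {l : ℕ | ∀ t : ℕ, l ≤ t → cntVal m (m 0 + t) = N}

/-- The ribbon `[p_1,…,p_l]` attached to a coordinate configuration `m`:
the list of multiplicities of the successive values of `m`, up to the last value of
multiplicity `< N` (so the head is the rightmost column and the last entry the
leftmost column). -/
noncomputable def ribbonOf (N : ℕ) (m : ℕ → ℤ) : List ℕ :=
  List.ofFn (fun t : Fin (ribbonLen N m) => cntVal m (m 0 + (t : ℕ)))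

/-- The set `W_N` of coordinate configurations with consecutive values: differences of
successive entries in `{0,1}`, each value of multiplicity `≤ N`, eventually equal
to the vacuum levels `((1)^N (2)^N (3)^N …)`. -/
def WN (N : ℕ) : Set (ℕ → ℤ) :=
  {m | (∀ i, m (i + 1) = m i ∨ m (i + 1) = m i + 1) ∧ (∀ i, m i < m (i + N)) ∧
    ∃ M, ∀ i, M ≤ i → m i = levPart N (-(i : ℤ))}

/-- The set `R_N` of rank-`N` ribbons, encoded by their lists of column heights
(from the right): all heights in `{1,…,N}`, the leftmost column of height `< N`,
and total length divisible by `N`. -/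
def RN (N : ℕ) : Set (List ℕ) :=
  {L | (∀ p ∈ L, 1 ≤ p ∧ p ≤ N) ∧ (∀ h, L.getLast? = some h → h < N) ∧ N ∣ L.sum}

set_option linter.unusedSectionVars false

namespace Stmt17

lemma levPart_neg (N : ℕ) (hN : 0 < N) (i : ℕ) :
    levPart N (-(i : ℤ)) = ((i / N : ℕ) : ℤ) + 1 := by
  unfold levPart
  have h := Nat.div_add_mod i N
  have hmod := Nat.mod_lt i hN
  have hN' : (N : ℤ) ≠ 0 := by exact_mod_cast hN.ne'
  have h1 : (-(i : ℤ) - 1) = ((N : ℤ) - (i % N : ℕ) - 1) + (N : ℤ) * (-(↑(i / N)) - 1) := by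
    push_cast
    nlinarith [h]
  rw [h1, Int.add_mul_ediv_left _ _ hN']
  rw [Int.ediv_eq_zero_of_lt (by push_cast; omega) (by push_cast; omega)]
  ring

/-- column heights extended by `N` beyond the list -/
def pOf (N : ℕ) (L : List ℕ) (u : ℕ) : ℕ := L.getD u N
/-- partial sums of column heights -/
def SOf (N : ℕ) (L : List ℕ) (t : ℕ) : ℕ := ∑ u ∈ Finset.range t, pOf N L u
/-- which value-slot index `i` sits in -/
noncomputable def tOf (N : ℕ) (L : List ℕ) (i : ℕ) : ℕ := sInf {t | i < SOf N L (t + 1)}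
/-- inverse map: the configuration attached to a ribbon -/
noncomputable def mOf (N : ℕ) (L : List ℕ) (i : ℕ) : ℤ :=
  ((L.sum / N : ℕ) : ℤ) - L.length + 1 + tOf N L i

variable {N : ℕ} {L : List ℕ}

lemma SOf_succ (t : ℕ) : SOf N L (t + 1) = SOf N L t + pOf N L t :=
  Finset.sum_range_succ _ _

lemma SOf_mono : Monotone (SOf N L) := fun a b hab =>
  Finset.sum_le_sum_of_subset (Finset.range_subset_range.2 hab)

section pos
variable (hp1 : ∀ u, 1 ≤ pOf N L u)
include hp1

lemma le_SOf (t : ℕ) : t ≤ SOf N L t := by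
  calc t = ∑ _u ∈ Finset.range t, 1 := by simp
  _ ≤ SOf N L t := Finset.sum_le_sum fun u _ => hp1 u

lemma tOf_lt (i : ℕ) : i < SOf N L (tOf N L i + 1) :=
  Nat.sInf_mem (⟨i, lt_of_lt_of_le (Nat.lt_succ_self i) (le_SOf hp1 (i + 1))⟩ :
    Set.Nonempty {t | i < SOf N L (t + 1)})

omit hp1 in
lemma tOf_ge (i : ℕ) : SOf N L (tOf N L i) ≤ i := by
  by_contra h
  push_neg at h
  have h0 : tOf N L i ≠ 0 := by
    intro e
    rw [e] at h
    simp [SOf] at h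
  have hmem : tOf N L i - 1 ∈ {t | i < SOf N L (t + 1)} := by
    simp only [Set.mem_setOf_eq]
    rw [Nat.sub_add_cancel (Nat.one_le_iff_ne_zero.2 h0)]
    exact h
  have h2 : tOf N L i ≤ tOf N L i - 1 := Nat.sInf_le hmem
  omega

lemma tOf_eq {t i : ℕ} (h1 : SOf N L t ≤ i) (h2 : i < SOf N L (t + 1)) :
    tOf N L i = t := by
  have hle : tOf N L i ≤ t := Nat.sInf_le h2
  rcases lt_or_eq_of_le hle with hlt | he
  · exact absurd (lt_of_lt_of_le (tOf_lt hp1 i) (SOf_mono (by omega)))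
      (not_lt.2 h1)
  · exact he

lemma tOf_mem_Ico {t i : ℕ} : tOf N L i = t ↔ SOf N L t ≤ i ∧ i < SOf N L (t + 1) := by
  constructor
  · rintro rfl
    exact ⟨tOf_ge i, tOf_lt hp1 i⟩
  · rintro ⟨h1, h2⟩
    exact tOf_eq hp1 h1 h2

lemma tOf_zero : tOf N L 0 = 0 :=
  tOf_eq hp1 (by simp [SOf]) (by have := hp1 0; simp [SOf]; omega)

lemma tOf_succ (i : ℕ) : tOf N L (i + 1) = tOf N L i ∨ tOf N L (i + 1) = tOf N L i + 1 := by
  have h1 : tOf N L (i + 1) ≤ tOf N L i + 1 := by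
    apply Nat.sInf_le
    have := tOf_lt hp1 i
    have := SOf_succ (N := N) (L := L) (tOf N L i + 1)
    have := hp1 (tOf N L i + 1)
    simp only [Set.mem_setOf_eq]
    omega
  have h2 : tOf N L i ≤ tOf N L (i + 1) := by
    by_contra h
    push_neg at h
    have hmem := tOf_lt hp1 (i + 1)
    have : SOf N L (tOf N L (i+1) + 1) ≤ SOf N L (tOf N L i) := SOf_mono (by omega)
    have := tOf_ge (N := N) (L := L) i
    omega
  omega

lemma tOf_add_N (hpN : ∀ u, pOf N L u ≤ N) (i : ℕ) :
    tOf N L i < tOf N L (i + N) := by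
  by_contra h
  push_neg at h
  have h1 : SOf N L (tOf N L (i + N) + 1) ≤ SOf N L (tOf N L i + 1) := SOf_mono (by omega)
  have h2 := tOf_lt hp1 (i + N)
  have h3 := SOf_succ (N := N) (L := L) (tOf N L i)
  have h4 := hpN (tOf N L i)
  have h5 := tOf_ge (N := N) (L := L) i
  omega

end pos

section RNside
variable (hN : 2 ≤ N) (hL : L ∈ RN N)
include hN hL

lemma hp1_of_RN : ∀ u, 1 ≤ pOf N L u := by
  intro u
  unfold pOf
  rcases lt_or_ge u L.length with h | h
  · rw [List.getD_eq_getElem L N h]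
    exact (hL.1 _ (List.getElem_mem h)).1
  · rw [List.getD_eq_default L N h]; omega

lemma hpN_of_RN : ∀ u, pOf N L u ≤ N := by
  intro u
  unfold pOf
  rcases lt_or_ge u L.length with h | h
  · rw [List.getD_eq_getElem L N h]
    exact (hL.1 _ (List.getElem_mem h)).2
  · rw [List.getD_eq_default L N h]

omit hN hL

lemma SOf_length : SOf N L L.length = L.sum := by
  conv_rhs => rw [← List.ofFn_get L, List.sum_ofFn]
  rw [SOf, ← Fin.sum_univ_eq_sum_range (fun u => pOf N L u) L.length]
  apply Finset.sum_congr rfl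
  intro u _
  simp [pOf, List.getD_eq_getElem L N u.isLt]

lemma pOf_of_le {u : ℕ} (h : L.length ≤ u) : pOf N L u = N :=
  List.getD_eq_default L N h

lemma SOf_add (j : ℕ) : SOf N L (L.length + j) = L.sum + j * N := by
  induction j with
  | zero => simpa using SOf_length
  | succ j ih =>
    rw [show L.length + (j+1) = (L.length + j) + 1 by ring, SOf_succ, ih,
      pOf_of_le (by omega)]
    ring

include hN hL

lemma mOf_eventual : ∀ i, L.sum ≤ i → mOf N L i = levPart N (-(i : ℤ)) := by
  intro i hi
  obtain ⟨k, hsk⟩ := hL.2.2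
  have hkdef : L.sum / N = k := by rw [hsk]; exact Nat.mul_div_cancel_left k (by omega)
  have hq : tOf N L i = L.length + (i - L.sum) / N := by
    apply tOf_eq (hp1_of_RN hN hL)
    · rw [SOf_add]
      have := Nat.div_mul_le_self (i - L.sum) N
      omega
    · rw [show L.length + (i - L.sum)/N + 1 = L.length + ((i - L.sum)/N + 1) by ring,
        SOf_add]
      have h3 : i - L.sum < ((i - L.sum) / N + 1) * N := by
        have h1 := Nat.div_add_mod (i - L.sum) N
        have h2 : (i - L.sum) % N < N := Nat.mod_lt _ (by omega)
        calc i - L.sum = N * ((i - L.sum) / N) + (i - L.sum) % N := h1.symm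
          _ < N * ((i - L.sum) / N) + N := by omega
          _ = ((i - L.sum) / N + 1) * N := by ring
      exact lt_of_lt_of_eq ((Nat.sub_lt_iff_lt_add hi).1 h3) (add_comm _ _)
  have hdivsub : (i - L.sum) / N = i / N - k := by
    rw [hsk, Nat.sub_mul_div i N k]
  have hkle : k ≤ i / N := by
    rw [Nat.le_div_iff_mul_le (show 0 < N by omega), mul_comm]
    omega
  rw [levPart_neg N (by omega), mOf, hq, hkdef, hdivsub]
  push_cast [Nat.cast_sub hkle]
  ring

lemma mOf_mem_WN : mOf N L ∈ WN N := by
  refine ⟨fun i => ?_, fun i => ?_, L.sum, mOf_eventual hN hL⟩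
  · rcases tOf_succ (hp1_of_RN hN hL) i with h | h <;> [left; right] <;>
      simp only [mOf, h] <;> push_cast <;> ring
  · have := tOf_add_N (hp1_of_RN hN hL) (hpN_of_RN hN hL) i
    simp only [mOf]
    omega

lemma tOf_fiber (t : ℕ) : {i | tOf N L i = t} = Set.Ico (SOf N L t) (SOf N L (t+1)) := by
  ext i
  simpa using tOf_mem_Ico (hp1_of_RN hN hL)

lemma mOf_zero : mOf N L 0 = ((L.sum / N : ℕ) : ℤ) - L.length + 1 := by
  simp [mOf, tOf_zero (hp1_of_RN hN hL)]

lemma cnt_mOf (t : ℕ) : cntVal (mOf N L) (mOf N L 0 + t) = pOf N L t := by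
  unfold cntVal
  have hset : {i | mOf N L i = mOf N L 0 + t} = {i | tOf N L i = t} := by
    ext i
    simp only [Set.mem_setOf_eq, mOf, tOf_zero (hp1_of_RN hN hL)]
    constructor
    · intro h
      have : ((tOf N L i : ℤ)) = t := by push_cast at h; omega
      exact_mod_cast this
    · intro h; rw [h]; push_cast; ring
  rw [hset, tOf_fiber hN hL, ← Finset.coe_Ico, Set.ncard_coe_finset, Nat.card_Ico,
    SOf_succ]
  omega

lemma ribbonLen_mOf : ribbonLen N (mOf N L) = L.length := by
  unfold ribbonLen
  have hsetEq : {l : ℕ | ∀ t : ℕ, l ≤ t → cntVal (mOf N L) (mOf N L 0 + t) = N} =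
      {l : ℕ | ∀ t : ℕ, l ≤ t → pOf N L t = N} := by
    ext l'
    simp only [Set.mem_setOf_eq]
    constructor <;> intro h t ht <;> have := cnt_mOf hN hL t <;>
      [rw [← this]; rw [this]] <;> exact h t ht
  rw [hsetEq]
  have hmem : L.length ∈ {l : ℕ | ∀ t : ℕ, l ≤ t → pOf N L t = N} :=
    fun t ht => pOf_of_le ht
  have hle := Nat.sInf_le hmem
  rcases Nat.eq_zero_or_pos L.length with h0 | hpos
  · omega
  · by_contra hne
    have hlt : sInf {l : ℕ | ∀ t : ℕ, l ≤ t → pOf N L t = N} < L.length := by omega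
    have hmem' := Nat.sInf_mem (⟨L.length, hmem⟩ :
      Set.Nonempty {l : ℕ | ∀ t : ℕ, l ≤ t → pOf N L t = N})
    have hlastN := hmem' (L.length - 1) (by omega)
    have hne' : L ≠ [] := by intro h; rw [h] at hpos; simp at hpos
    have hlast := hL.2.1 (L.getLast hne') (List.getLast?_eq_getLast hne' ▸ rfl)
    rw [List.getLast_eq_getElem] at hlast
    rw [pOf, List.getD_eq_getElem L N (by omega)] at hlastN
    omega

lemma ribbonOf_mOf : ribbonOf N (mOf N L) = L := by
  unfold ribbonOf
  rw [ribbonLen_mOf hN hL]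
  conv_rhs => rw [← List.ofFn_get L]
  congr 1
  funext t
  rw [cnt_mOf hN hL]
  simp [pOf, List.getD_eq_getElem L N t.isLt]

end RNside

lemma ncard_Iio (n : ℕ) : (Set.Iio n).ncard = n := by
  rw [← Finset.coe_Iio, Set.ncard_coe_finset, Nat.card_Iio]

lemma ncard_Ico (a b : ℕ) : (Set.Ico a b).ncard = b - a := by
  rw [← Finset.coe_Ico, Set.ncard_coe_finset, Nat.card_Ico]

/-- the counting function: number of indices with value ≤ v -/
noncomputable def cB (m : ℕ → ℤ) (v : ℤ) : ℕ := Set.ncard {j | m j ≤ v}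

variable {N : ℕ} {m : ℕ → ℤ}

lemma W_mono (hm : m ∈ WN N) : Monotone m := by
  apply monotone_nat_of_le_succ
  intro i
  rcases hm.1 i with h | h <;> omega

lemma W_unbdd (hN : 2 ≤ N) (hm : m ∈ WN N) (v : ℤ) : ∃ J, ∀ j, J ≤ j → v < m j := by
  obtain ⟨-, -, M, hM⟩ := hm
  refine ⟨max M (v.toNat * N), fun j hj => ?_⟩
  rw [hM j (le_trans (le_max_left _ _) hj), levPart_neg N (by omega)]
  have h1 : v.toNat * N ≤ j := le_trans (le_max_right _ _) hj
  have h2 : v.toNat ≤ j / N := (Nat.le_div_iff_mul_le (by omega)).2 h1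
  have h3 : v ≤ (v.toNat : ℤ) := Int.self_le_toNat v
  have h4 : ((v.toNat : ℕ) : ℤ) ≤ ((j / N : ℕ) : ℤ) := by exact_mod_cast h2
  omega

lemma W_fin (hN : 2 ≤ N) (hm : m ∈ WN N) (v : ℤ) : {j | m j ≤ v}.Finite := by
  obtain ⟨J, hJ⟩ := W_unbdd hN hm v
  apply Set.Finite.subset (Set.finite_Iio J)
  intro j hj
  simp only [Set.mem_setOf_eq] at hj
  by_contra h
  simp only [Set.mem_Iio, not_lt] at h
  exact absurd (hJ j h) (by omega)

lemma W_finEq (hN : 2 ≤ N) (hm : m ∈ WN N) (v : ℤ) : {j | m j = v}.Finite :=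
  (W_fin hN hm v).subset (fun j hj => le_of_eq hj)

lemma W_seg (hN : 2 ≤ N) (hm : m ∈ WN N) (v : ℤ) :
    {j | m j ≤ v} = Set.Iio (cB m v) := by
  have hmono := W_mono hm
  have hf := W_fin hN hm v
  obtain ⟨n, hn⟩ : ∃ n, {j | m j ≤ v} = Set.Iio n := by
    rcases Set.eq_empty_or_nonempty {j | m j ≤ v} with he | hne
    · exact ⟨0, by rw [he]; ext j; simp⟩
    · have hne' : hf.toFinset.Nonempty := (Set.Finite.toFinset_nonempty hf).2 hne
      refine ⟨hf.toFinset.max' hne' + 1, ?_⟩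
      ext j
      simp only [Set.mem_setOf_eq, Set.mem_Iio, Nat.lt_succ_iff]
      constructor
      · intro hj
        exact Finset.le_max' _ _ (by simp [Set.Finite.mem_toFinset]; exact hj)
      · intro hj
        have hmax : m (hf.toFinset.max' hne') ≤ v := by
          have := hf.toFinset.max'_mem hne'
          simpa [Set.Finite.mem_toFinset] using this
        exact le_trans (hmono hj) hmax
  have hcb : cB m v = n := by rw [cB, hn, ncard_Iio]
  rw [hn, hcb]

lemma W_le_iff (hN : 2 ≤ N) (hm : m ∈ WN N) (i : ℕ) (v : ℤ) :
    m i ≤ v ↔ i < cB m v := by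
  have h := W_seg hN hm v
  constructor
  · intro hi
    have : i ∈ {j | m j ≤ v} := hi
    rwa [h, Set.mem_Iio] at this
  · intro hi
    have : i ∈ Set.Iio (cB m v) := hi
    rw [← h] at this
    exact this

lemma cB_succ (hN : 2 ≤ N) (hm : m ∈ WN N) (v : ℤ) :
    cB m (v + 1) = cB m v + cntVal m (v + 1) := by
  have h1 : {j | m j ≤ v + 1} = {j | m j ≤ v} ∪ {j | m j = v + 1} := by
    ext j
    simp only [Set.mem_setOf_eq, Set.mem_union]
    omega
  rw [cB, h1, Set.ncard_union_eq (by
      rw [Set.disjoint_left]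
      intro j hj1 hj2
      simp only [Set.mem_setOf_eq] at hj1 hj2
      omega) (W_fin hN hm v) (W_finEq hN hm (v + 1))]
  rfl

lemma cB_neg (hm : m ∈ WN N) {v : ℤ} (h : v < m 0) : cB m v = 0 := by
  have hmono := W_mono hm
  have he : {j | m j ≤ v} = ∅ := by
    ext j
    simp only [Set.mem_setOf_eq, Set.mem_empty_iff_false, iff_false, not_le]
    exact lt_of_lt_of_le h (hmono (Nat.zero_le j))
  rw [cB, he, Set.ncard_empty]

lemma cnt_le (hm : m ∈ WN N) (v : ℤ) : cntVal m v ≤ N := by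
  have hmono := W_mono hm
  rcases Set.eq_empty_or_nonempty {j | m j = v} with he | hne
  · simp [cntVal, he]
  · set j0 := sInf {j | m j = v} with hj0def
    have hj0 : m j0 = v := Nat.sInf_mem hne
    have hsub : {j | m j = v} ⊆ Set.Ico j0 (j0 + N) := by
      intro j hj
      simp only [Set.mem_setOf_eq] at hj
      refine ⟨Nat.sInf_le hj, ?_⟩
      by_contra hge
      push_neg at hge
      have h1 := hm.2.1 j0
      have h2 : m (j0 + N) ≤ m j := hmono hge
      omega
    calc cntVal m v ≤ (Set.Ico j0 (j0 + N)).ncard :=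
          Set.ncard_le_ncard hsub (Set.finite_Ico _ _)
      _ = N := by rw [ncard_Ico]; omega

lemma exists_val (hN : 2 ≤ N) (hm : m ∈ WN N) (t : ℕ) : ∃ j, m j = m 0 + t := by
  rcases Nat.eq_zero_or_pos t with rfl | ht
  · exact ⟨0, by simp⟩
  obtain ⟨J, hJ⟩ := W_unbdd hN hm (m 0 + t - 1)
  have hAne : Set.Nonempty {i | m 0 + t ≤ m i} := ⟨J, by
    have := hJ J le_rfl
    simp only [Set.mem_setOf_eq]
    omega⟩
  set j' := sInf {i | m 0 + t ≤ m i} with hj'def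
  have hj' : m 0 + t ≤ m j' := Nat.sInf_mem hAne
  have ht' : (1 : ℤ) ≤ (t : ℤ) := by exact_mod_cast ht
  have h0 : j' ≠ 0 := by
    intro e
    rw [e] at hj'
    omega
  have hpred : j' - 1 ∉ {i | m 0 + t ≤ m i} := Nat.notMem_of_lt_sInf (by omega)
  simp only [Set.mem_setOf_eq, not_le] at hpred
  have hstep := hm.1 (j' - 1)
  rw [Nat.sub_add_cancel (by omega)] at hstep
  exact ⟨j', by rcases hstep with h | h <;> omega⟩

lemma cnt_pos (hN : 2 ≤ N) (hm : m ∈ WN N) (t : ℕ) : 1 ≤ cntVal m (m 0 + t) := by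
  obtain ⟨j, hj⟩ := exists_val hN hm t
  exact (Set.ncard_pos (W_finEq hN hm _)).2 ⟨j, hj⟩

lemma cB_big (hN : 2 ≤ N) (hm : m ∈ WN N) :
    ∃ V : ℕ, ∀ v : ℕ, V ≤ v → cB m (v : ℤ) = v * N := by
  have hmono := W_mono hm
  obtain ⟨-, -, M, hM⟩ := hm
  refine ⟨M + M / N + 1, fun v hv => ?_⟩
  have hmM : m M = ((M / N : ℕ) : ℤ) + 1 := by
    rw [hM M le_rfl, levPart_neg N (by omega)]
  have hset : {j | m j ≤ (v : ℤ)} = Set.Iio (v * N) := by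
    ext j
    simp only [Set.mem_setOf_eq, Set.mem_Iio]
    constructor
    · intro hj
      rcases lt_or_ge j M with h | h
      · have hv' : v ≤ v * N := Nat.le_mul_of_pos_right v (by omega)
        have h5 : M ≤ v := by
          calc M ≤ M + (M / N + 1) := Nat.le_add_right _ _
            _ = M + M / N + 1 := (add_assoc _ _ _).symm
            _ ≤ v := hv
        omega
      · rw [hM j h, levPart_neg N (by omega)] at hj
        have h2 : j / N < v := by
          have : ((j / N : ℕ) : ℤ) < (v : ℤ) := by omega
          exact_mod_cast this
        have := (Nat.div_lt_iff_lt_mul (show 0 < N by omega)).1 h2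
        omega
    · intro hj
      rcases lt_or_ge j M with h | h
      · have h1 : m j ≤ m M := hmono h.le
        rw [hmM] at h1
        have h2 : M / N + 1 ≤ v := by omega
        have h3 : ((M / N : ℕ) : ℤ) + 1 ≤ (v : ℤ) := by exact_mod_cast h2
        omega
      · rw [hM j h, levPart_neg N (by omega)]
        have h2 : j / N < v := (Nat.div_lt_iff_lt_mul (by omega)).2 (by omega)
        have h3 : ((j / N : ℕ) : ℤ) < (v : ℤ) := by exact_mod_cast h2
        omega
  rw [cB, hset, ncard_Iio]

lemma rset_nonempty (hN : 2 ≤ N) (hm : m ∈ WN N) :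
    Set.Nonempty {l : ℕ | ∀ t : ℕ, l ≤ t → cntVal m (m 0 + t) = N} := by
  obtain ⟨V, hV⟩ := cB_big hN hm
  refine ⟨(V + 1 - m 0).toNat, fun t ht => ?_⟩
  have h1 : (V : ℤ) + 1 - m 0 ≤ ((V + 1 - m 0).toNat : ℤ) := Int.self_le_toNat _
  have h2 : ((V + 1 - m 0).toNat : ℤ) ≤ (t : ℤ) := by exact_mod_cast ht
  have h3 : (V : ℤ) + 1 ≤ m 0 + t := by omega
  set u := (m 0 + t - 1).toNat with hu
  have hu' : (u : ℤ) = m 0 + t - 1 := Int.toNat_of_nonneg (by omega)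
  have huV : V ≤ u := by
    have : (V : ℤ) ≤ (u : ℤ) := by omega
    exact_mod_cast this
  have hsucc := cB_succ hN hm (u : ℤ)
  have hb1 : cB m (u : ℤ) = u * N := hV u huV
  have hb2 : cB m ((u + 1 : ℕ) : ℤ) = (u + 1) * N := hV (u + 1) (by omega)
  have hcast : ((u + 1 : ℕ) : ℤ) = (u : ℤ) + 1 := by push_cast; ring
  rw [hcast] at hb2
  have harg : (u : ℤ) + 1 = m 0 + t := by omega
  rw [harg] at hsucc hb2
  have hexp : (u + 1) * N = u * N + N := by ring
  omega

lemma rlen_spec (hN : 2 ≤ N) (hm : m ∈ WN N) :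
    ∀ t : ℕ, ribbonLen N m ≤ t → cntVal m (m 0 + t) = N :=
  Nat.sInf_mem (rset_nonempty hN hm)

lemma rlen_last (hN : 2 ≤ N) (hm : m ∈ WN N) (hpos : 0 < ribbonLen N m) :
    cntVal m (m 0 + ((ribbonLen N m - 1 : ℕ) : ℤ)) < N := by
  have h1 : ribbonLen N m - 1 < ribbonLen N m := by omega
  have hnm : ribbonLen N m - 1 ∉ {l : ℕ | ∀ t : ℕ, l ≤ t → cntVal m (m 0 + t) = N} :=
    Nat.notMem_of_lt_sInf h1
  simp only [Set.mem_setOf_eq, not_forall] at hnm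
  obtain ⟨t, ht, hne⟩ := hnm
  rcases lt_or_ge t (ribbonLen N m) with h | h
  · have : t = ribbonLen N m - 1 := by omega
    subst this
    exact lt_of_le_of_ne (cnt_le hm _) hne
  · exact absurd (rlen_spec hN hm t h) hne

lemma sum_cnt (hN : 2 ≤ N) (hm : m ∈ WN N) (j : ℕ) :
    (∑ t ∈ Finset.range j, cntVal m (m 0 + t)) = cB m (m 0 + j - 1) := by
  induction j with
  | zero =>
    rw [Finset.range_zero, Finset.sum_empty,
      show m 0 + ((0 : ℕ) : ℤ) - 1 = m 0 - 1 by push_cast; ring]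
    exact (cB_neg hm (by omega)).symm
  | succ j ih =>
    rw [Finset.sum_range_succ, ih]
    have h := cB_succ hN hm (m 0 + j - 1)
    have e1 : m 0 + (j : ℤ) - 1 + 1 = m 0 + (j : ℤ) := by ring
    rw [e1] at h
    have e2 : m 0 + ((j + 1 : ℕ) : ℤ) - 1 = m 0 + (j : ℤ) := by push_cast; ring
    rw [e2, h]

lemma cB_shift (hN : 2 ≤ N) (hm : m ∈ WN N) (j : ℕ) :
    cB m (m 0 + ribbonLen N m - 1 + j) = cB m (m 0 + ribbonLen N m - 1) + j * N := by
  induction j with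
  | zero => simp
  | succ j ih =>
    have h := cB_succ hN hm (m 0 + ribbonLen N m - 1 + j)
    have hc : cntVal m (m 0 + ribbonLen N m - 1 + j + 1) = N := by
      have e : m 0 + (ribbonLen N m : ℤ) - 1 + j + 1 = m 0 + ((ribbonLen N m + j : ℕ) : ℤ) := by
        push_cast; ring
      rw [e]
      exact rlen_spec hN hm _ (by omega)
    rw [hc] at h
    have e2 : m 0 + (ribbonLen N m : ℤ) - 1 + ((j + 1 : ℕ) : ℤ) =
        m 0 + (ribbonLen N m : ℤ) - 1 + j + 1 := by push_cast; ring
    rw [e2, h, ih]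
    ring

lemma sum_ribbon (hN : 2 ≤ N) (hm : m ∈ WN N) :
    ((ribbonOf N m).sum : ℤ) = N * (m 0 + ribbonLen N m - 1) := by
  have h1 : (ribbonOf N m).sum = cB m (m 0 + ribbonLen N m - 1) := by
    rw [ribbonOf, List.sum_ofFn,
      Fin.sum_univ_eq_sum_range (fun t : ℕ => cntVal m (m 0 + (t : ℤ))) (ribbonLen N m),
      sum_cnt hN hm]
  obtain ⟨V, hV⟩ := cB_big hN hm
  set z := m 0 + (ribbonLen N m : ℤ) - 1 with hzdef
  set j := ((V : ℤ) + 1 - z).toNat with hjdef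
  have hj : (V : ℤ) + 1 - z ≤ (j : ℤ) := Int.self_le_toNat _
  set w := (z + j).toNat with hwdef
  have hwz : (w : ℤ) = z + j := Int.toNat_of_nonneg (by omega)
  have h2 := cB_shift hN hm j
  have h3 : cB m (z + (j : ℤ)) = cB m (w : ℤ) := by rw [hwz]
  have h4 : cB m (w : ℤ) = w * N := hV w (by
    have : (V : ℤ) ≤ (w : ℤ) := by omega
    exact_mod_cast this)
  have h5 : cB m z + j * N = w * N := by rw [← h2, h3, h4]
  have h6 : (cB m z : ℤ) + (j : ℤ) * N = (w : ℤ) * N := by exact_mod_cast h5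
  rw [h1]
  rw [hwz] at h6
  linear_combination h6

lemma mapsTo (hN : 2 ≤ N) (hm : m ∈ WN N) : ribbonOf N m ∈ RN N := by
  refine ⟨?_, ?_, ?_⟩
  · intro p hp
    rw [ribbonOf, List.mem_ofFn] at hp
    obtain ⟨t, rfl⟩ := hp
    exact ⟨cnt_pos hN hm t, cnt_le hm _⟩
  · intro h hh
    rcases Nat.eq_zero_or_pos (ribbonLen N m) with h0 | hpos
    · rw [ribbonOf] at hh
      rw [h0] at hh
      simp at hh
    · have hlen : (ribbonOf N m).length = ribbonLen N m := by simp [ribbonOf]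
      have hne : ribbonOf N m ≠ [] := by
        intro e
        rw [e] at hlen
        simp at hlen
        omega
      rw [List.getLast?_eq_getLast hne] at hh
      have hh' : h = (ribbonOf N m).getLast hne := (Option.some.inj hh).symm
      have hget : (ribbonOf N m).getLast hne =
          cntVal m (m 0 + ((ribbonLen N m - 1 : ℕ) : ℤ)) := by
        rw [List.getLast_eq_getElem]
        simp only [ribbonOf, List.getElem_ofFn, hlen]
        congr 1
        simp [List.length_ofFn]
      rw [hh', hget]
      exact rlen_last hN hm hpos
  · have hs := sum_ribbon hN hm
    have hd : (N : ℤ) ∣ ((ribbonOf N m).sum : ℤ) := ⟨_, hs⟩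
    exact_mod_cast hd

lemma mOf_ribbon (hN : 2 ≤ N) (hm : m ∈ WN N) : mOf N (ribbonOf N m) = m := by
  set L := ribbonOf N m with hLdef
  set l := ribbonLen N m with hldef
  have hlen : L.length = l := by simp [hLdef, ribbonOf, hldef]
  have hs := sum_ribbon hN hm
  rw [← hldef, ← hLdef] at hs
  have hz : 0 ≤ m 0 + (l : ℤ) - 1 := by
    by_contra hneg
    push_neg at hneg
    have h1 : (N : ℤ) * (m 0 + (l : ℤ) - 1) < 0 :=
      mul_neg_of_pos_of_neg (by exact_mod_cast (show 0 < N by omega)) hneg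
    rw [← hs] at h1
    exact absurd h1 (not_lt.2 (Int.natCast_nonneg _))
  have hsum : L.sum = N * (m 0 + (l : ℤ) - 1).toNat := by
    have h2 : ((N * (m 0 + (l : ℤ) - 1).toNat : ℕ) : ℤ) = (L.sum : ℤ) := by
      rw [Nat.cast_mul, Int.toNat_of_nonneg hz, hs]
    exact_mod_cast h2.symm
  have hk : (L.sum / N : ℕ) = (m 0 + (l : ℤ) - 1).toNat := by
    rw [hsum, Nat.mul_div_cancel_left _ (show 0 < N by omega)]
  have hm0 : ((L.sum / N : ℕ) : ℤ) - L.length + 1 = m 0 := by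
    rw [hk, hlen, Int.toNat_of_nonneg hz]
    ring
  have hp : ∀ u, pOf N L u = cntVal m (m 0 + u) := by
    intro u
    rcases lt_or_ge u l with h | h
    · rw [pOf, List.getD_eq_getElem L N (by omega)]
      simp [hLdef, ribbonOf]
    · rw [pOf, List.getD_eq_default L N (by omega)]
      exact (rlen_spec hN hm u (by omega)).symm
  have hp1 : ∀ u, 1 ≤ pOf N L u := fun u => by rw [hp]; exact cnt_pos hN hm u
  have hS : ∀ t, SOf N L t = cB m (m 0 + t - 1) := by
    intro t
    rw [SOf, Finset.sum_congr rfl (fun u _ => hp u)]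
    exact sum_cnt hN hm t
  funext i
  rw [mOf, hm0]
  have h1 : SOf N L (tOf N L i) ≤ i := tOf_ge i
  have h2 : i < SOf N L (tOf N L i + 1) := tOf_lt hp1 i
  rw [hS] at h1 h2
  have e2 : m 0 + ((tOf N L i + 1 : ℕ) : ℤ) - 1 = m 0 + (tOf N L i : ℤ) := by
    push_cast; ring
  rw [e2] at h2
  have hub : m i ≤ m 0 + (tOf N L i : ℤ) := (W_le_iff hN hm i _).2 h2
  have hlb : ¬ m i ≤ m 0 + (tOf N L i : ℤ) - 1 := fun hc =>
    absurd ((W_le_iff hN hm i _).1 hc) (by omega)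
  omega


end Stmt17

/-- The map `m ↦ [p_1,…,p_l]` sending a coordinate configuration to the list of
multiplicities of its distinct values (up to the last value of multiplicity `< N`)
is a bijection from `W_N` onto `R_N`. -/
theorem stmt17 (N : ℕ) (hN : 2 ≤ N) :
    Set.BijOn (ribbonOf N) (WN N) (RN N) := by
  constructor
  · exact fun m hm => Stmt17.mapsTo hN hm
  constructor
  · intro m1 h1 m2 h2 he
    rw [← Stmt17.mOf_ribbon hN h1, ← Stmt17.mOf_ribbon hN h2, he]
  · intro L hL
    exact ⟨Stmt17.mOf N L, Stmt17.mOf_mem_WN hN hL, Stmt17.ribbonOf_mOf hN hL⟩
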